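/- Let λ ∈ ℝ and let f_Q be a Q-level quantizer satisfying the constrained stationarity condition ∫_{τ_i}^{τ_{i+1}} ((λ + 2)τ − 2 m_i) φ(τ) dτ = 0 for every i = 1, …, Q, together with E[f_Q(g) g] = 1. Then E[f_Q(g)²] = (2 + λ)/2, and the mean squared error satisfies e'_Q := E[(f_Q(g) − g)²] = λ/2; moreover E[(f_Q(g) − g)²] equals σ² := E[(f_Q(g) − μ g)²] where μ = E[f_Q(g) g] = 1. -/

import Mathlib

noncomputable section
open MeasureTheory ProbabilityTheory Real Set

/-- The standard Gaussian measure on `ℝ`. -/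
def stdGauss : Measure ℝ := gaussianReal 0 1

instance : IsProbabilityMeasure stdGauss := by unfold stdGauss; infer_instance

/-- A `Q`-level quantizer: thresholds `-∞ = τ₁ < τ₂ < … < τ_{Q+1} = +∞` (indexed here by
`Fin (Q+1)`, so `τ 0 = ⊥` and `τ (Fin.last Q) = ⊤`) and values `m₁, …, m_Q`, with the
step function `f` equal to `m i` on the cell `[τ i, τ (i+1))`. -/
structure Quantizer (Q : ℕ) where
  m : Fin Q → ℝ
  τ : Fin (Q + 1) → EReal
  f : ℝ → ℝ
  τ_bot : τ 0 = ⊥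
  τ_top : τ (Fin.last Q) = ⊤
  τ_mono : StrictMono τ
  f_eq : ∀ (i : Fin Q) (t : ℝ), τ i.castSucc ≤ (t : EReal) → (t : EReal) < τ i.succ → f t = m i

/-- The `i`-th quantization cell `[τ_i, τ_{i+1})` (as a subset of `ℝ`). -/
def Quantizer.cell {Q : ℕ} (q : Quantizer Q) (i : Fin Q) : Set ℝ :=
  {t : ℝ | q.τ i.castSucc ≤ (t : EReal) ∧ (t : EReal) < q.τ i.succ}

/-- The mean squared error `E[(f_Q(g) - g)²]` of a quantizer. -/
def MSE {Q : ℕ} (q : Quantizer Q) : ℝ := ∫ t, (q.f t - t) ^ 2 ∂stdGauss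

/-- Constrained (Lagrangian) stationarity:
`∫_{τ_i}^{τ_{i+1}} ((λ+2)τ − 2 m_i) φ(τ) dτ = 0` for every cell. -/
def ConstrainedStationary {Q : ℕ} (q : Quantizer Q) (lam : ℝ) : Prop :=
  ∀ i : Fin Q, ∫ t in q.cell i, ((lam + 2) * t - 2 * q.m i) ∂stdGauss = 0

/- ### Auxiliary lemmas: the standard Gaussian measure as a density -/

lemma stdGauss_eq : stdGauss
    = (volume : Measure ℝ).withDensity fun x => ((gaussianPDFReal 0 1 x).toNNReal : ENNReal) := by
  rw [stdGauss, gaussianReal_of_var_ne_zero 0 one_ne_zero]; rfl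

lemma integral_stdGauss (g : ℝ → ℝ) :
    ∫ x, g x ∂stdGauss = ∫ x, gaussianPDFReal 0 1 x * g x := by
  rw [stdGauss_eq, integral_withDensity_eq_integral_smul
    (measurable_gaussianPDFReal 0 1).real_toNNReal]
  congr 1; ext x
  rw [NNReal.smul_def, Real.coe_toNNReal _ (gaussianPDFReal_nonneg 0 1 x), smul_eq_mul]

lemma integrable_stdGauss_iff (g : ℝ → ℝ) :
    Integrable g stdGauss ↔ Integrable (fun x => gaussianPDFReal 0 1 x * g x) := by
  rw [stdGauss_eq, integrable_withDensity_iff_integrable_smul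
    (measurable_gaussianPDFReal 0 1).real_toNNReal]
  constructor <;> intro h <;>
  · refine h.congr (Filter.Eventually.of_forall fun x => ?_)
    simp only [NNReal.smul_def, Real.coe_toNNReal _ (gaussianPDFReal_nonneg 0 1 x), smul_eq_mul]

lemma pdf_eq (x : ℝ) : gaussianPDFReal 0 1 x = (√(2*π))⁻¹ * rexp (-(2⁻¹) * x^2) := by
  unfold gaussianPDFReal
  norm_num
  left; ring_nf

lemma integrable_sq_exp : Integrable (fun x : ℝ => x^2 * rexp (-(2⁻¹) * x^2)) := by
  have h := integrable_rpow_mul_exp_neg_mul_sq (b := 2⁻¹) (by norm_num) (s := 2) (by norm_num)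
  refine h.congr (Filter.Eventually.of_forall fun x => ?_)
  simp only [Real.rpow_natCast]
  norm_num

lemma integral_sq_exp : ∫ x : ℝ, x^2 * rexp (-(2⁻¹) * x^2) = √(2*π) := by
  have hD : ∀ x : ℝ, HasDerivAt (fun x : ℝ => x * rexp (-(2⁻¹) * x^2))
      (rexp (-(2⁻¹) * x^2) - x^2 * rexp (-(2⁻¹) * x^2)) x := by
    intro x
    have h1 : HasDerivAt (fun x : ℝ => -(2⁻¹) * x^2) (-x) x := by
      have := (hasDerivAt_pow 2 x).const_mul (-(2⁻¹ : ℝ))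
      refine this.congr_deriv ?_; push_cast; ring
    have h2 := h1.exp
    have h3 := (hasDerivAt_id x).mul h2
    refine h3.congr_deriv ?_; simp; ring
  have hint : Integrable (fun x : ℝ => rexp (-(2⁻¹) * x^2) - x^2 * rexp (-(2⁻¹) * x^2)) :=
    (integrable_exp_neg_mul_sq (by norm_num)).sub integrable_sq_exp
  have hF : Integrable (fun x : ℝ => x * rexp (-(2⁻¹) * x^2)) :=
    integrable_mul_exp_neg_mul_sq (by norm_num)
  have h0 := integral_eq_zero_of_hasDerivAt_of_integrable hD hint hF
  rw [integral_sub (integrable_exp_neg_mul_sq (by norm_num)) integrable_sq_exp, sub_eq_zero] at h0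
  rw [← h0, integral_gaussian]
  rw [show π / 2⁻¹ = 2 * π by ring]

lemma integral_sq_stdGauss : ∫ x, x^2 ∂stdGauss = 1 := by
  rw [integral_stdGauss]
  have h : ∀ x : ℝ, gaussianPDFReal 0 1 x * x^2 = (√(2*π))⁻¹ * (x^2 * rexp (-(2⁻¹) * x^2)) :=
    fun x => by rw [pdf_eq]; ring
  simp_rw [h]
  rw [integral_const_mul, integral_sq_exp, inv_mul_cancel₀]
  positivity

lemma integrable_sq_stdGauss : Integrable (fun x => x^2) stdGauss := by
  rw [integrable_stdGauss_iff]
  refine (integrable_sq_exp.const_mul (√(2*π))⁻¹).congr (Filter.Eventually.of_forall fun x => ?_)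
  simp only [pdf_eq]; ring

lemma integrable_id_stdGauss : Integrable (fun x => x) stdGauss := by
  rw [integrable_stdGauss_iff]
  refine ((integrable_mul_exp_neg_mul_sq (b := 2⁻¹) (by norm_num)).const_mul
    (√(2*π))⁻¹).congr (Filter.Eventually.of_forall fun x => ?_)
  simp only [pdf_eq]; ring

/- ### Auxiliary lemmas: cells and the step function -/

variable {Q : ℕ} (q : Quantizer Q)

lemma cell_measurable (i : Fin Q) : MeasurableSet (q.cell i) := by
  have : q.cell i = (fun t : ℝ => (t : EReal)) ⁻¹' (Set.Ico (q.τ i.castSucc) (q.τ i.succ)) := rfl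
  rw [this]
  exact continuous_coe_real_ereal.measurable measurableSet_Ico

lemma exists_cell (t : ℝ) : ∃ i : Fin Q, t ∈ q.cell i := by
  classical
  set F : Finset (Fin (Q + 1)) := Finset.univ.filter (fun j => q.τ j ≤ (t : EReal)) with hF
  have h0 : (0 : Fin (Q+1)) ∈ F := by
    simp [hF, q.τ_bot]
  have hne : F.Nonempty := ⟨0, h0⟩
  set j := F.max' hne with hj
  have hjF : j ∈ F := F.max'_mem hne
  have hjle : q.τ j ≤ (t : EReal) := by simpa [hF] using hjF
  have hjlast : j ≠ Fin.last Q := by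
    intro h
    rw [h, q.τ_top] at hjle
    exact absurd (top_le_iff.mp hjle) (by simp)
  have hjlt : (j : ℕ) < Q := by
    have := Fin.lt_last_iff_ne_last.mpr hjlast
    simpa [Fin.lt_def] using this
  refine ⟨⟨j, hjlt⟩, ?_, ?_⟩
  · have : (⟨j, hjlt⟩ : Fin Q).castSucc = j := by
      simp [Fin.ext_iff]
    rw [this]; exact hjle
  · by_contra h
    push_neg at h
    have hsuccF : (⟨j, hjlt⟩ : Fin Q).succ ∈ F := Finset.mem_filter.mpr ⟨Finset.mem_univ _, h⟩
    have := F.le_max' _ hsuccF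
    rw [← hj] at this
    have hlt : j < (⟨j, hjlt⟩ : Fin Q).succ := by
      simp [Fin.lt_def]
    exact absurd (lt_of_lt_of_le hlt this) (lt_irrefl _)

lemma cell_disjoint : Pairwise (Function.onFun Disjoint q.cell) := by
  have key : ∀ i j : Fin Q, i < j → Disjoint (q.cell i) (q.cell j) := by
    intro i j hij
    rw [Set.disjoint_left]
    rintro t ⟨_, hi2⟩ ⟨hj1, _⟩
    have hle : i.succ ≤ j.castSucc := by
      simp only [Fin.le_def, Fin.val_succ, Fin.coe_castSucc]
      exact hij
    have := q.τ_mono.monotone hle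
    exact absurd ((hi2.trans_le this).trans_le hj1) (lt_irrefl _)
  intro i j hij
  rcases lt_or_gt_of_ne hij with h | h
  · exact key i j h
  · exact (key j i h).symm

lemma f_repr : q.f = fun t => ∑ i : Fin Q, (q.cell i).indicator (fun _ => q.m i) t := by
  funext t
  obtain ⟨i, hi⟩ := exists_cell q t
  rw [Finset.sum_eq_single_of_mem i (Finset.mem_univ i)]
  · rw [Set.indicator_of_mem hi, q.f_eq i t hi.1 hi.2]
  · intro j _ hj
    apply Set.indicator_of_notMem
    intro hjt
    exact Set.disjoint_left.mp (cell_disjoint q hj.symm) hi hjt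

lemma f_meas : Measurable q.f := by
  rw [f_repr q]
  exact Finset.measurable_sum _ fun i _ => measurable_const.indicator (cell_measurable q i)

lemma f_bdd : ∀ t, ‖q.f t‖ ≤ ∑ i : Fin Q, ‖q.m i‖ := by
  intro t
  obtain ⟨i, hi⟩ := exists_cell q t
  rw [q.f_eq i t hi.1 hi.2]
  exact Finset.single_le_sum (fun j _ => norm_nonneg (q.m j)) (Finset.mem_univ i)

lemma iUnion_cell : ⋃ i ∈ (Finset.univ : Finset (Fin Q)), q.cell i = Set.univ := by
  rw [Set.eq_univ_iff_forall]
  intro t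
  obtain ⟨i, hi⟩ := exists_cell q t
  exact Set.mem_biUnion (Finset.mem_univ i) hi

/-- Under constrained stationarity with multiplier `λ` and `E[f_Q(g) g] = 1`:
`E[f_Q(g)²] = (2+λ)/2`, `e'_Q = E[(f_Q(g)-g)²] = λ/2`, and `e'_Q = σ²` where
`σ² = E[(f_Q(g) - μ g)²]` with `μ = E[f_Q(g) g] = 1`. -/
theorem constrained_mse {Q : ℕ} (q : Quantizer Q) (lam : ℝ)
    (hstat : ConstrainedStationary q lam)
    (hμ : ∫ t, q.f t * t ∂stdGauss = 1) :
    (∫ t, q.f t ^ 2 ∂stdGauss = (2 + lam) / 2) ∧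
    (∫ t, (q.f t - t) ^ 2 ∂stdGauss = lam / 2) ∧
    (∫ t, (q.f t - t) ^ 2 ∂stdGauss =
      ∫ t, (q.f t - (∫ s, q.f s * s ∂stdGauss) * t) ^ 2 ∂stdGauss) := by
  have hbdd : ∀ᵐ t ∂stdGauss, ‖q.f t‖ ≤ ∑ i : Fin Q, ‖q.m i‖ := Filter.Eventually.of_forall (f_bdd q)
  have hfm : AEStronglyMeasurable q.f stdGauss := (f_meas q).aestronglyMeasurable
  -- integrability facts
  have hf : Integrable q.f stdGauss := by
    have := Integrable.bdd_mul (integrable_const (1 : ℝ)) hfm hbdd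
    simpa using this
  have hft : Integrable (fun t => q.f t * t) stdGauss :=
    Integrable.bdd_mul integrable_id_stdGauss hfm hbdd
  have hff : Integrable (fun t => q.f t * q.f t) stdGauss :=
    Integrable.bdd_mul hf hfm hbdd
  have ht2 : Integrable (fun t => t^2) stdGauss := integrable_sq_stdGauss
  -- key stationarity identity
  have key : ∫ t, q.f t * ((lam + 2) * t - 2 * q.f t) ∂stdGauss = 0 := by
    have hint : Integrable (fun t => q.f t * ((lam + 2) * t - 2 * q.f t)) stdGauss :=
      Integrable.bdd_mul ((integrable_id_stdGauss.const_mul (lam+2)).sub (hf.const_mul 2))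
        hfm hbdd
    calc ∫ t, q.f t * ((lam + 2) * t - 2 * q.f t) ∂stdGauss
        = ∫ t in ⋃ i ∈ (Finset.univ : Finset (Fin Q)), q.cell i,
            q.f t * ((lam + 2) * t - 2 * q.f t) ∂stdGauss := by
          rw [iUnion_cell q, setIntegral_univ]
      _ = ∑ i : Fin Q, ∫ t in q.cell i, q.f t * ((lam + 2) * t - 2 * q.f t) ∂stdGauss := by
          exact integral_biUnion_finset Finset.univ (fun i _ => cell_measurable q i)
            ((cell_disjoint q).set_pairwise _) (fun i _ => hint.integrableOn)
      _ = ∑ i : Fin Q, ∫ t in q.cell i, q.m i * ((lam + 2) * t - 2 * q.m i) ∂stdGauss := by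
          refine Finset.sum_congr rfl fun i _ => ?_
          refine setIntegral_congr_fun (cell_measurable q i) fun t ht => ?_
          rw [q.f_eq i t ht.1 ht.2]
      _ = ∑ i : Fin Q, q.m i * ∫ t in q.cell i, ((lam + 2) * t - 2 * q.m i) ∂stdGauss := by
          refine Finset.sum_congr rfl fun i _ => ?_
          exact integral_const_mul _ _
      _ = 0 := by
          refine Finset.sum_eq_zero fun i _ => ?_
          rw [hstat i, mul_zero]
  -- expand key
  have hft2 : Integrable (fun t => (lam + 2) * (q.f t * t)) stdGauss := hft.const_mul (lam+2)
  have hff2 : Integrable (fun t => 2 * (q.f t * q.f t)) stdGauss := hff.const_mul 2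
  have expand : ∫ t, q.f t * ((lam + 2) * t - 2 * q.f t) ∂stdGauss
      = (lam + 2) * ∫ t, q.f t * t ∂stdGauss - 2 * ∫ t, q.f t * q.f t ∂stdGauss := by
    rw [← integral_const_mul (lam + 2), ← integral_const_mul 2, ← integral_sub hft2 hff2]
    congr 1; funext t; ring
  rw [expand, hμ] at key
  have hff_val : ∫ t, q.f t * q.f t ∂stdGauss = (2 + lam) / 2 := by linarith
  have h1 : ∫ t, q.f t ^ 2 ∂stdGauss = (2 + lam) / 2 := by
    rw [← hff_val]; congr 1; funext t; ring
  refine ⟨h1, ?_, ?_⟩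
  · have hexp : ∫ t, (q.f t - t) ^ 2 ∂stdGauss
        = ∫ t, (q.f t * q.f t - 2 * (q.f t * t) + t^2) ∂stdGauss := by
      congr 1; funext t; ring
    have hc : Integrable (fun t => 2 * (q.f t * t)) stdGauss := hft.const_mul 2
    have hsub : Integrable (fun t => q.f t * q.f t - 2 * (q.f t * t)) stdGauss := hff.sub hc
    rw [hexp, integral_add hsub ht2, integral_sub hff hc, integral_const_mul, hμ, hff_val,
      integral_sq_stdGauss]
    ring
  · rw [hμ]; simp only [one_mul]
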